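/- Let B₁(n) denote the number of permutations of length n containing exactly one 132 pattern and exactly one 123 pattern. Then in ℚ[[z]], the generating function G₁(z) = ∑_{n≥0} B₁(n)·zⁿ satisfies (1 - 2z)³·G₁(z) = 2z⁵. -/

import Mathlib

/-- The number of 132 patterns of a permutation `π` of `Fin n`:
triples of indices `i₁ < i₂ < i₃` with `π i₁ < π i₃ < π i₂`. -/
def count132 {n : ℕ} (π : Equiv.Perm (Fin n)) : ℕ :=
  (Finset.univ.filter (fun p : Fin n × Fin n × Fin n =>
    p.1 < p.2.1 ∧ p.2.1 < p.2.2 ∧ π p.1 < π p.2.2 ∧ π p.2.2 < π p.2.1)).card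

/-- The number of 123 patterns of a permutation `π` of `Fin n`:
triples of indices `i₁ < i₂ < i₃` with `π i₁ < π i₂ < π i₃`. -/
def count123 {n : ℕ} (π : Equiv.Perm (Fin n)) : ℕ :=
  (Finset.univ.filter (fun p : Fin n × Fin n × Fin n =>
    p.1 < p.2.1 ∧ p.2.1 < p.2.2 ∧ π p.1 < π p.2.1 ∧ π p.2.1 < π p.2.2)).card

/-- The number of 12 patterns of a permutation `π` of `Fin n`:
pairs of indices `i₁ < i₂` with `π i₁ < π i₂`. -/
def count12 {n : ℕ} (π : Equiv.Perm (Fin n)) : ℕ :=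
  (Finset.univ.filter (fun p : Fin n × Fin n =>
    p.1 < p.2 ∧ π p.1 < π p.2)).card

/-- The number of permutations of length n with exactly one 132 pattern and exactly 1 123 patterns. -/
def B (n : ℕ) : ℕ :=
  (Finset.univ.filter (fun π : Equiv.Perm (Fin n) =>
    count132 π = 1 ∧ count123 π = 1)).card

open Finset Equiv

namespace GenFunAux

variable {n : ℕ}

/-- Insert value `v` at the front of permutation `σ`. -/
def ins (v : Fin (n+1)) (σ : Equiv.Perm (Fin n)) : Equiv.Perm (Fin (n+1)) :=
  (finSuccEquiv n).trans ((σ.optionCongr).trans (finSuccEquiv' v).symm)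

@[simp] lemma ins_zero (v : Fin (n+1)) (σ : Perm (Fin n)) : ins v σ 0 = v := by simp [ins]

@[simp] lemma ins_succ (v : Fin (n+1)) (σ : Perm (Fin n)) (i : Fin n) :
    ins v σ i.succ = v.succAbove (σ i) := by simp [ins]

lemma ins_injective : Function.Injective (fun p : Fin (n+1) × Perm (Fin n) => ins p.1 p.2) := by
  rintro ⟨v, σ⟩ ⟨w, τ⟩ h
  simp only at h
  have hv : v = w := by
    have := congrArg (fun π : Perm (Fin (n+1)) => π 0) h
    simpa using this
  subst hv
  refine Prod.ext rfl ?_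
  ext i
  have := congrArg (fun π : Perm (Fin (n+1)) => π i.succ) h
  simp only [ins_succ] at this
  exact congrArg Fin.val (Fin.succAbove_right_injective this)

lemma card_filter_perm (P : Perm (Fin (n+1)) → Prop) [DecidablePred P] :
    (univ.filter P).card =
      ∑ v : Fin (n+1), (univ.filter (fun σ : Perm (Fin n) => P (ins v σ))).card := by
  classical
  have hbij : Function.Bijective (fun p : Fin (n+1) × Perm (Fin n) => ins p.1 p.2) :=
    (Fintype.bijective_iff_injective_and_card _).2 ⟨ins_injective, by
      simp [Fintype.card_perm, Nat.factorial_succ]⟩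
  rw [Finset.card_filter]
  rw [← Equiv.sum_comp (Equiv.ofBijective _ hbij) (fun π => if P π then 1 else 0)]
  simp only [Equiv.ofBijective_apply]
  rw [Fintype.sum_prod_type]
  exact Finset.sum_congr rfl fun v _ => (Finset.card_filter _ _).symm

lemma ins_symm_apply (v : Fin (n+1)) (σ : Perm (Fin n)) (y : Fin n) :
    (ins v σ)⁻¹ (v.succAbove y) = Fin.succ (σ⁻¹ y) := by
  rw [Equiv.Perm.inv_def, Equiv.symm_apply_eq]
  simp

lemma ins_symm_self (v : Fin (n+1)) (σ : Perm (Fin n)) : (ins v σ)⁻¹ v = 0 := by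
  rw [Equiv.Perm.inv_def, Equiv.symm_apply_eq]
  simp

/-- The value `n+1` (top) appears before the value `n` (second) -/
def topDec (σ : Perm (Fin (n+2))) : Prop :=
  σ⁻¹ (Fin.last (n+1)) < σ⁻¹ ((Fin.last n).castSucc)

instance (σ : Perm (Fin (n+2))) : Decidable (topDec σ) := by unfold topDec; infer_instance

lemma sA_of_le (v : Fin (n+1)) (x : Fin n) (h : (v:ℕ) ≤ (x:ℕ)) : v.succAbove x = x.succ :=
  Fin.succAbove_of_le_castSucc v x (by rw [Fin.le_def]; simpa using h)

lemma topDec_ins_last (σ : Perm (Fin (n+2))) : topDec (ins (Fin.last (n+2)) σ) := by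
  unfold topDec
  have h1 : (ins (Fin.last (n+2)) σ)⁻¹ (Fin.last (n+2)) = 0 := ins_symm_self _ _
  have h2 : (Fin.last (n+2)).succAbove (Fin.last (n+1)) = (Fin.last (n+1)).castSucc := by
    rw [Fin.succAbove_last]
  have h3 : (ins (Fin.last (n+2)) σ)⁻¹ ((Fin.last (n+1)).castSucc)
      = Fin.succ (σ⁻¹ (Fin.last (n+1))) := by
    rw [← h2, ins_symm_apply]
  rw [h1, h3]
  exact Fin.succ_pos _

lemma topDec_ins_sec (σ : Perm (Fin (n+2))) : ¬ topDec (ins ((Fin.last (n+1)).castSucc) σ) := by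
  unfold topDec
  set v : Fin (n+3) := (Fin.last (n+1)).castSucc with hv
  have h1 : (ins v σ)⁻¹ ((Fin.last (n+1)).castSucc) = 0 := ins_symm_self _ _
  have h2 : v.succAbove (Fin.last (n+1)) = Fin.last (n+2) := by
    rw [sA_of_le _ _ (by simp [hv]), Fin.succ_last]
  have h3 : (ins v σ)⁻¹ (Fin.last (n+2)) = Fin.succ (σ⁻¹ (Fin.last (n+1))) := by
    rw [← h2, ins_symm_apply]
  rw [h1, h3]
  simp

lemma topDec_ins_small (σ : Perm (Fin (n+2))) (v : Fin (n+3)) (h : (v:ℕ) ≤ n) :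
    topDec (ins v σ) ↔ topDec σ := by
  unfold topDec
  have h2 : v.succAbove (Fin.last (n+1)) = Fin.last (n+2) := by
    rw [sA_of_le _ _ (by simpa using h.trans (Nat.le_succ n)), Fin.succ_last]
  have h4 : v.succAbove ((Fin.last n).castSucc) = (Fin.last (n+1)).castSucc := by
    rw [sA_of_le _ _ (by simpa using h)]
    apply Fin.ext; simp
  rw [← h2, ← h4, ins_symm_apply, ins_symm_apply, Fin.succ_lt_succ_iff]

/-- pairs j < k which together with `v` inserted in front form a 132 pattern -/
def t132 (v : Fin (n+1)) (σ : Perm (Fin n)) : ℕ :=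
  (univ.filter (fun p : Fin n × Fin n =>
    p.1 < p.2 ∧ v < v.succAbove (σ p.2) ∧ v.succAbove (σ p.2) < v.succAbove (σ p.1))).card

/-- pairs j < k which together with `v` inserted in front form a 123 pattern -/
def t123 (v : Fin (n+1)) (σ : Perm (Fin n)) : ℕ :=
  (univ.filter (fun p : Fin n × Fin n =>
    p.1 < p.2 ∧ v < v.succAbove (σ p.1) ∧ v.succAbove (σ p.1) < v.succAbove (σ p.2))).card

lemma count132_ins (v : Fin (n+1)) (σ : Perm (Fin n)) :
    count132 (ins v σ) = t132 v σ + count132 σ := by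
  classical
  simp only [count132, t132, Finset.card_filter, Fintype.sum_prod_type]
  rw [Fin.sum_univ_succ]
  congr 1
  · rw [Fin.sum_univ_succ]
    simp only [Fin.not_lt_zero, false_and, if_false, Finset.sum_const_zero, zero_add,
      lt_self_iff_false]
    refine Finset.sum_congr rfl fun j _ => ?_
    rw [Fin.sum_univ_succ]
    simp [Fin.succ_lt_succ_iff, Fin.succ_pos, Fin.succAbove_lt_succAbove_iff, and_assoc]
  · refine Finset.sum_congr rfl fun i _ => ?_
    rw [Fin.sum_univ_succ]
    simp only [Fin.not_lt_zero, false_and, if_false, Finset.sum_const_zero, zero_add]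
    refine Finset.sum_congr rfl fun j _ => ?_
    rw [Fin.sum_univ_succ]
    simp [Fin.succ_lt_succ_iff, Fin.succAbove_lt_succAbove_iff]

lemma count123_ins (v : Fin (n+1)) (σ : Perm (Fin n)) :
    count123 (ins v σ) = t123 v σ + count123 σ := by
  classical
  simp only [count123, t123, Finset.card_filter, Fintype.sum_prod_type]
  rw [Fin.sum_univ_succ]
  congr 1
  · rw [Fin.sum_univ_succ]
    simp only [Fin.not_lt_zero, false_and, if_false, Finset.sum_const_zero, zero_add,
      lt_self_iff_false]
    refine Finset.sum_congr rfl fun j _ => ?_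
    rw [Fin.sum_univ_succ]
    simp [Fin.succ_lt_succ_iff, Fin.succ_pos, Fin.succAbove_lt_succAbove_iff, and_assoc]
  · refine Finset.sum_congr rfl fun i _ => ?_
    rw [Fin.sum_univ_succ]
    simp only [Fin.not_lt_zero, false_and, if_false, Finset.sum_const_zero, zero_add]
    refine Finset.sum_congr rfl fun j _ => ?_
    rw [Fin.sum_univ_succ]
    simp [Fin.succ_lt_succ_iff, Fin.succAbove_lt_succAbove_iff]

lemma card_above (v : Fin (n+1)) (σ : Perm (Fin n)) :
    (univ.filter (fun x : Fin n => v < v.succAbove (σ x))).card = n - v := by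
  classical
  have h1 : (univ.filter (fun x : Fin n => v < v.succAbove (σ x))).card
      = (univ.filter (fun y : Fin n => v < v.succAbove y)).card := by
    refine Finset.card_bij' (fun x _ => σ x) (fun y _ => σ.symm y) ?_ ?_ ?_ ?_ <;>
      simp [Finset.mem_filter]
  rw [h1, show n - (v:ℕ) = (Finset.Ico (v:ℕ) n).card by rw [Nat.card_Ico]]
  refine Finset.card_bij' (fun y _ => (y : ℕ)) (fun a ha => ⟨a, (Finset.mem_Ico.1 ha).2⟩)
    ?_ ?_ ?_ ?_
  · intro y hy
    rw [Finset.mem_filter] at hy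
    rw [Finset.mem_Ico]
    have := hy.2
    rw [Fin.lt_succAbove_iff_le_castSucc, Fin.le_def] at this
    exact ⟨by simpa using this, y.isLt⟩
  · intro a ha
    rw [Finset.mem_filter]
    refine ⟨Finset.mem_univ _, ?_⟩
    rw [Fin.lt_succAbove_iff_le_castSucc, Fin.le_def]
    simpa using (Finset.mem_Ico.1 ha).1
  · intro y _; rfl
  · intro a _; rfl

lemma t_add (v : Fin (n+1)) (σ : Perm (Fin n)) :
    2 * (t132 v σ + t123 v σ) = (n - v) * (n - v - 1) := by
  classical
  set Q : Fin n → Prop := fun x => v < v.succAbove (σ x) with hQ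
  set T := univ.filter Q with hT
  set K := univ.filter (fun p : Fin n × Fin n => p.1 < p.2 ∧ Q p.1 ∧ Q p.2) with hK
  have hinj : ∀ x y : Fin n, σ x = σ y → x = y := fun x y h => σ.injective h
  have hAB : t132 v σ + t123 v σ = K.card := by
    rw [t132, t123, ← Finset.card_union_of_disjoint]
    · congr 1
      rw [← Finset.filter_or]
      refine Finset.filter_congr fun p _ => ?_
      constructor
      · rintro (⟨h1, h2, h3⟩ | ⟨h1, h2, h3⟩)
        · exact ⟨h1, lt_trans h2 h3, h2⟩
        · exact ⟨h1, h2, lt_trans h2 h3⟩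
      · rintro ⟨h1, h2, h3⟩
        rcases lt_trichotomy (σ p.1) (σ p.2) with h | h | h
        · exact Or.inr ⟨h1, h2, Fin.succAbove_lt_succAbove_iff.2 h⟩
        · exact absurd (hinj _ _ h) (ne_of_lt h1)
        · exact Or.inl ⟨h1, h3, Fin.succAbove_lt_succAbove_iff.2 h⟩
    · rw [Finset.disjoint_filter]
      rintro p _ ⟨h1, h2, h3⟩ ⟨g1, g2, g3⟩
      exact absurd (lt_trans h3 g3) (lt_irrefl _)
  have hswap : (K.image Prod.swap).card = K.card :=
    Finset.card_image_of_injective _ Prod.swap_injective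
  have hunion : K ∪ K.image Prod.swap = T.offDiag := by
    ext p
    simp only [Finset.mem_union, Finset.mem_image, hK, Finset.mem_filter, Finset.mem_univ,
      true_and, Finset.mem_offDiag, hT]
    constructor
    · rintro (⟨h1, h2, h3⟩ | ⟨q, ⟨h1, h2, h3⟩, rfl⟩)
      · exact ⟨by simpa using h2, by simpa using h3, ne_of_lt h1⟩
      · exact ⟨by simpa using h3, by simpa using h2, (ne_of_lt h1).symm⟩
    · rintro ⟨h1, h2, h3⟩
      rcases lt_or_gt_of_ne h3 with h | h
      · exact Or.inl ⟨h, by simpa using h1, by simpa using h2⟩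
      · exact Or.inr ⟨p.swap, ⟨h, by simpa using h2, by simpa using h1⟩, by simp⟩
  have hdisj : Disjoint K (K.image Prod.swap) := by
    rw [Finset.disjoint_left]
    rintro p hp hp'
    rw [Finset.mem_image] at hp'
    obtain ⟨q, hq, rfl⟩ := hp'
    rw [hK, Finset.mem_filter] at hp hq
    exact absurd (lt_trans hp.2.1 hq.2.1) (lt_irrefl _)
  have hcard : 2 * K.card = T.offDiag.card := by
    rw [← hunion, Finset.card_union_of_disjoint hdisj, hswap, two_mul]
  have hTcard : T.card = n - v := card_above v σ
  rw [hAB, Nat.mul_sub_one, ← hTcard, ← Finset.offDiag_card, hcard]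

lemma t132_third (σ : Perm (Fin (n+2))) :
    t132 ((Fin.last n).castSucc.castSucc) σ = if topDec σ then 1 else 0 := by
  classical
  set v : Fin (n+3) := (Fin.last n).castSucc.castSucc with hv
  have hval : (v:ℕ) = n := by simp [hv]
  have key : ∀ p : Fin (n+2) × Fin (n+2),
      (p.1 < p.2 ∧ v < v.succAbove (σ p.2) ∧ v.succAbove (σ p.2) < v.succAbove (σ p.1))
      ↔ (p.1 = σ⁻¹ (Fin.last (n+1)) ∧ p.2 = σ⁻¹ ((Fin.last n).castSucc) ∧ p.1 < p.2) := by
    intro p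
    constructor
    · rintro ⟨h1, h2, h3⟩
      have h2' : n ≤ (σ p.2 : ℕ) := by
        rw [Fin.lt_succAbove_iff_le_castSucc, Fin.le_def] at h2
        simpa [hval] using h2
      rw [Fin.succAbove_lt_succAbove_iff, Fin.lt_def] at h3
      have hb : (σ p.2 : ℕ) = n := by
        have := (σ p.1).isLt
        omega
      have ha : (σ p.1 : ℕ) = n + 1 := by
        have := (σ p.1).isLt
        omega
      have hb' : σ p.2 = (Fin.last n).castSucc := by
        apply Fin.ext; simpa using hb
      have ha' : σ p.1 = Fin.last (n+1) := by
        apply Fin.ext; simpa using ha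
      exact ⟨by rw [← ha']; simp, by rw [← hb']; simp, h1⟩
    · rintro ⟨h1, h2, h3⟩
      refine ⟨h3, ?_, ?_⟩
      · rw [h2, Fin.lt_succAbove_iff_le_castSucc, Fin.le_def]
        simp [hval]
      · rw [Fin.succAbove_lt_succAbove_iff, h1, h2]
        simp [Fin.lt_def]
  by_cases h : topDec σ
  · rw [if_pos h, t132, Finset.card_eq_one]
    refine ⟨(σ⁻¹ (Fin.last (n+1)), σ⁻¹ ((Fin.last n).castSucc)), ?_⟩
    ext p
    simp only [Finset.mem_filter, Finset.mem_univ, true_and, Finset.mem_singleton, key]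
    constructor
    · rintro ⟨e1, e2, _⟩; exact Prod.ext e1 e2
    · rintro rfl; exact ⟨rfl, rfl, h⟩
  · rw [if_neg h, t132, Finset.card_eq_zero, Finset.filter_eq_empty_iff]
    rintro p -
    rw [key]
    rintro ⟨e1, e2, hlt⟩
    exact h (by rwa [e1, e2] at hlt)

lemma t_zero_last (σ : Perm (Fin (n+2))) :
    t132 (Fin.last (n+2)) σ = 0 ∧ t123 (Fin.last (n+2)) σ = 0 := by
  have h := t_add (Fin.last (n+2)) σ
  rw [Fin.val_last] at h
  simp only [Nat.sub_self, Nat.zero_mul, zero_mul] at h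
  omega

lemma t_zero_sec (σ : Perm (Fin (n+2))) :
    t132 ((Fin.last (n+1)).castSucc) σ = 0 ∧ t123 ((Fin.last (n+1)).castSucc) σ = 0 := by
  have h := t_add ((Fin.last (n+1)).castSucc) σ
  have hval : (((Fin.last (n+1)).castSucc : Fin (n+3)) : ℕ) = n + 1 := by simp
  rw [hval] at h
  have : n + 2 - (n+1) = 1 := by omega
  rw [this] at h
  simp only [Nat.sub_self, Nat.mul_zero, mul_zero] at h
  omega

lemma t123_third (σ : Perm (Fin (n+2))) :
    t123 ((Fin.last n).castSucc.castSucc) σ = if topDec σ then 0 else 1 := by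
  have h := t_add ((Fin.last n).castSucc.castSucc) σ
  have hval : (((Fin.last n).castSucc.castSucc : Fin (n+3)) : ℕ) = n := by simp
  rw [hval] at h
  have h2 : n + 2 - n = 2 := by omega
  rw [h2] at h
  have h3 := t132_third σ
  by_cases hd : topDec σ <;> simp only [hd, if_true, if_false] at h3 ⊢ <;> omega

lemma t_small (σ : Perm (Fin (n+2))) (v : Fin (n+3)) (h : (v:ℕ) + 3 ≤ n + 2) :
    3 ≤ t132 v σ + t123 v σ := by
  have ht := t_add v σ
  have h6 : 3 * 2 ≤ (n + 2 - (v:ℕ)) * (n + 2 - (v:ℕ) - 1) :=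
    Nat.mul_le_mul (by omega) (by omega)
  omega

/-- the number of permutations of `Fin (n+2)` whose pattern counts and top-order
satisfy `P` -/
def MP (P : ℕ → ℕ → Bool → Prop) [∀ a b d, Decidable (P a b d)] (n : ℕ) : ℕ :=
  (univ.filter (fun σ : Perm (Fin (n+2)) =>
    P (count132 σ) (count123 σ) (decide (topDec σ)))).card

lemma MP_congr (P Q : ℕ → ℕ → Bool → Prop) [∀ a b d, Decidable (P a b d)]
    [∀ a b d, Decidable (Q a b d)] (h : ∀ a b d, P a b d ↔ Q a b d) (n : ℕ) :
    MP P n = MP Q n := by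
  unfold MP
  congr 1
  exact Finset.filter_congr fun σ _ => h _ _ _

lemma MP_false (n : ℕ) : MP (fun _ _ _ => False) n = 0 := by
  unfold MP
  simp

lemma MP_split (P Q : ℕ → ℕ → Bool → Prop) [∀ a b d, Decidable (P a b d)]
    [∀ a b d, Decidable (Q a b d)] (hd : ∀ a b d, ¬ (P a b d ∧ Q a b d)) (n : ℕ) :
    MP (fun a b d => P a b d ∨ Q a b d) n = MP P n + MP Q n := by
  unfold MP
  rw [Finset.filter_or, Finset.card_union_of_disjoint]
  rw [Finset.disjoint_filter]
  intro σ _ h1 h2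
  exact hd _ _ _ ⟨h1, h2⟩

lemma master (P : ℕ → ℕ → Bool → Prop) [∀ a b d, Decidable (P a b d)]
    (hP : ∀ a b d, P a b d → a + b ≤ 2) (n : ℕ) :
    MP P (n+1) = MP (fun a b _ => P a b true) n + MP (fun a b _ => P a b false) n
      + MP (fun a b d => (d = true ∧ P (a+1) b true) ∨ (d = false ∧ P a (b+1) false)) n := by
  classical
  unfold MP
  rw [show ((univ.filter (fun σ : Perm (Fin (n+1+2)) =>
        P (count132 σ) (count123 σ) (decide (topDec σ)))).card)
      = ((univ.filter (fun σ : Perm (Fin ((n+2)+1)) =>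
        P (count132 σ) (count123 σ) (decide (topDec σ)))).card) from rfl]
  rw [card_filter_perm]
  rw [Fin.sum_univ_castSucc, Fin.sum_univ_castSucc, Fin.sum_univ_castSucc]
  have hA : (∑ i : Fin n, (univ.filter (fun σ : Perm (Fin (n+2)) =>
      P (count132 (ins i.castSucc.castSucc.castSucc σ)) (count123 (ins i.castSucc.castSucc.castSucc σ))
        (decide (topDec (ins i.castSucc.castSucc.castSucc σ))))).card) = 0 := by
    refine Finset.sum_eq_zero fun i _ => ?_
    rw [Finset.card_eq_zero, Finset.filter_eq_empty_iff]
    rintro σ -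
    intro hcond
    have hle := hP _ _ _ hcond
    rw [count132_ins, count123_ins] at hle
    have h3 : 3 ≤ t132 i.castSucc.castSucc.castSucc σ + t123 i.castSucc.castSucc.castSucc σ :=
      t_small σ _ (by simpa using Nat.succ_le_of_lt i.isLt)
    omega
  have hB : (univ.filter (fun σ : Perm (Fin (n+2)) =>
      P (count132 (ins (Fin.last n).castSucc.castSucc σ)) (count123 (ins (Fin.last n).castSucc.castSucc σ))
        (decide (topDec (ins (Fin.last n).castSucc.castSucc σ))))).card
      = MP (fun a b d => (d = true ∧ P (a+1) b true) ∨ (d = false ∧ P a (b+1) false)) n := by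
    unfold MP
    congr 1
    refine Finset.filter_congr fun σ _ => ?_
    rw [count132_ins, count123_ins, t132_third, t123_third]
    have hts : topDec (ins (Fin.last n).castSucc.castSucc σ) ↔ topDec σ :=
      topDec_ins_small σ _ (by simp)
    by_cases hd : topDec σ
    · simp [hd, hts, Nat.add_comm]
    · simp [hd, hts, Nat.add_comm]
  have hC : (univ.filter (fun σ : Perm (Fin (n+2)) =>
      P (count132 (ins (Fin.last (n+1)).castSucc σ)) (count123 (ins (Fin.last (n+1)).castSucc σ))
        (decide (topDec (ins (Fin.last (n+1)).castSucc σ))))).card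
      = MP (fun a b _ => P a b false) n := by
    unfold MP
    congr 1
    refine Finset.filter_congr fun σ _ => ?_
    rw [count132_ins, count123_ins, (t_zero_sec σ).1, (t_zero_sec σ).2]
    simp [topDec_ins_sec σ]
  have hD : (univ.filter (fun σ : Perm (Fin (n+2)) =>
      P (count132 (ins (Fin.last (n+2)) σ)) (count123 (ins (Fin.last (n+2)) σ))
        (decide (topDec (ins (Fin.last (n+2)) σ))))).card
      = MP (fun a b _ => P a b true) n := by
    unfold MP
    congr 1
    refine Finset.filter_congr fun σ _ => ?_
    rw [count132_ins, count123_ins, (t_zero_last σ).1, (t_zero_last σ).2]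
    simp [topDec_ins_last σ]
  rw [hA, hB, hC, hD]
  unfold MP
  omega


abbrev P00 : ℕ → ℕ → Bool → Prop := fun a b _ => a = 0 ∧ b = 0
abbrev P00T : ℕ → ℕ → Bool → Prop := fun a b d => a = 0 ∧ b = 0 ∧ d = true
abbrev P00F : ℕ → ℕ → Bool → Prop := fun a b d => a = 0 ∧ b = 0 ∧ d = false
abbrev P01 : ℕ → ℕ → Bool → Prop := fun a b _ => a = 0 ∧ b = 1
abbrev P10 : ℕ → ℕ → Bool → Prop := fun a b _ => a = 1 ∧ b = 0
abbrev P01T : ℕ → ℕ → Bool → Prop := fun a b d => a = 0 ∧ b = 1 ∧ d = true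
abbrev P10F : ℕ → ℕ → Bool → Prop := fun a b d => a = 1 ∧ b = 0 ∧ d = false
abbrev P11 : ℕ → ℕ → Bool → Prop := fun a b _ => a = 1 ∧ b = 1

lemma l00 : ∀ m, MP P00 m = 2^(m+1) := by
  intro m
  induction m with
  | zero => decide
  | succ m ih =>
    rw [master P00 (by intro a b d h; omega) m]
    rw [MP_congr (fun a b _ => P00 a b true) P00 (by intro a b d; simp [P00]) m]
    rw [MP_congr (fun a b _ => P00 a b false) P00 (by intro a b d; simp [P00]) m]
    rw [MP_congr (fun a b d => (d = true ∧ P00 (a+1) b true) ∨ (d = false ∧ P00 a (b+1) false))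
      (fun _ _ _ => False) (by intro a b d; cases d <;> simp [P00]) m]
    simp only [MP_false]
    rw [ih]; ring

lemma l00T : ∀ m, MP P00T m = 2^m := by
  intro m
  cases m with
  | zero => decide
  | succ m =>
    rw [master P00T (by intro a b d h; omega) m]
    rw [MP_congr (fun a b _ => P00T a b true) P00 (by intro a b d; simp [P00, P00T]) m]
    rw [MP_congr (fun a b _ => P00T a b false) (fun _ _ _ => False)
      (by intro a b d; simp [P00T]) m]
    rw [MP_congr (fun a b d => (d = true ∧ P00T (a+1) b true) ∨ (d = false ∧ P00T a (b+1) false))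
      (fun _ _ _ => False) (by intro a b d; cases d <;> simp [P00T]) m]
    simp only [MP_false]
    rw [l00]; ring

lemma l00F : ∀ m, MP P00F m = 2^m := by
  intro m
  cases m with
  | zero => decide
  | succ m =>
    rw [master P00F (by intro a b d h; omega) m]
    rw [MP_congr (fun a b _ => P00F a b true) (fun _ _ _ => False)
      (by intro a b d; simp [P00F]) m]
    rw [MP_congr (fun a b _ => P00F a b false) P00 (by intro a b d; simp [P00, P00F]) m]
    rw [MP_congr (fun a b d => (d = true ∧ P00F (a+1) b true) ∨ (d = false ∧ P00F a (b+1) false))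
      (fun _ _ _ => False) (by intro a b d; cases d <;> simp [P00F]) m]
    simp only [MP_false]
    rw [l00]; ring

lemma r01 : ∀ m, MP P01 (m+1) = 2 * MP P01 m + 2^m := by
  intro m
  rw [master P01 (by intro a b d h; omega) m]
  rw [MP_congr (fun a b _ => P01 a b true) P01 (by intro a b d; simp [P01]) m]
  rw [MP_congr (fun a b _ => P01 a b false) P01 (by intro a b d; simp [P01]) m]
  rw [MP_congr (fun a b d => (d = true ∧ P01 (a+1) b true) ∨ (d = false ∧ P01 a (b+1) false))
    P00F (by intro a b d; cases d <;> simp [P01, P00F] <;> omega) m]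
  rw [l00F]; ring

lemma r10 : ∀ m, MP P10 (m+1) = 2 * MP P10 m + 2^m := by
  intro m
  rw [master P10 (by intro a b d h; omega) m]
  rw [MP_congr (fun a b _ => P10 a b true) P10 (by intro a b d; simp [P10]) m]
  rw [MP_congr (fun a b _ => P10 a b false) P10 (by intro a b d; simp [P10]) m]
  rw [MP_congr (fun a b d => (d = true ∧ P10 (a+1) b true) ∨ (d = false ∧ P10 a (b+1) false))
    P00T (by intro a b d; cases d <;> simp [P10, P00T] <;> omega) m]
  rw [l00T]; ring

lemma l01zero : MP P01 0 = 0 := by decide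
lemma l10zero : MP P10 0 = 0 := by decide

lemma l01 : ∀ m, MP P01 (m+1) = (m+1) * 2^m := by
  intro m
  induction m with
  | zero => rw [r01 0, l01zero]; norm_num
  | succ m ih => rw [r01 (m+1), ih]; ring

lemma l10 : ∀ m, MP P10 (m+1) = (m+1) * 2^m := by
  intro m
  induction m with
  | zero => rw [r10 0, l10zero]; norm_num
  | succ m ih => rw [r10 (m+1), ih]; ring

lemma r01T : ∀ m, MP P01T (m+1) = MP P01 m := by
  intro m
  rw [master P01T (by intro a b d h; omega) m]
  rw [MP_congr (fun a b _ => P01T a b true) P01 (by intro a b d; simp [P01, P01T]) m]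
  rw [MP_congr (fun a b _ => P01T a b false) (fun _ _ _ => False)
    (by intro a b d; simp [P01T]) m]
  rw [MP_congr (fun a b d => (d = true ∧ P01T (a+1) b true) ∨ (d = false ∧ P01T a (b+1) false))
    (fun _ _ _ => False) (by intro a b d; cases d <;> simp [P01T]) m]
  simp only [MP_false]
  omega

lemma r10F : ∀ m, MP P10F (m+1) = MP P10 m := by
  intro m
  rw [master P10F (by intro a b d h; omega) m]
  rw [MP_congr (fun a b _ => P10F a b true) (fun _ _ _ => False)
    (by intro a b d; simp [P10F]) m]
  rw [MP_congr (fun a b _ => P10F a b false) P10 (by intro a b d; simp [P10, P10F]) m]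
  rw [MP_congr (fun a b d => (d = true ∧ P10F (a+1) b true) ∨ (d = false ∧ P10F a (b+1) false))
    (fun _ _ _ => False) (by intro a b d; cases d <;> simp [P10F] <;> omega) m]
  simp only [MP_false]
  omega

lemma r11 : ∀ m, MP P11 (m+1) = 2 * MP P11 m + (MP P01T m + MP P10F m) := by
  intro m
  rw [master P11 (by intro a b d h; omega) m]
  rw [MP_congr (fun a b _ => P11 a b true) P11 (by intro a b d; simp [P11]) m]
  rw [MP_congr (fun a b _ => P11 a b false) P11 (by intro a b d; simp [P11]) m]
  rw [MP_congr (fun a b d => (d = true ∧ P11 (a+1) b true) ∨ (d = false ∧ P11 a (b+1) false))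
    (fun a b d => P01T a b d ∨ P10F a b d)
    (by intro a b d; cases d <;> simp [P11, P01T, P10F] <;> omega) m]
  rw [MP_split P01T P10F (by
    rintro a b d ⟨⟨_, _, h1⟩, ⟨_, _, h2⟩⟩
    rw [h1] at h2
    exact Bool.noConfusion h2) m]
  ring

lemma l11zero : MP P11 0 = 0 := by decide
lemma l01Tzero : MP P01T 0 = 0 := by decide
lemma l10Fzero : MP P10F 0 = 0 := by decide

lemma l11one : MP P11 1 = 0 := by
  rw [r11 0, l11zero, l01Tzero, l10Fzero]

lemma l11two : MP P11 2 = 0 := by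
  rw [r11 1, l11one, r01T 0, r10F 0, l01zero, l10zero]

lemma l11 : ∀ m, MP P11 (m+3) = (m+1) * (m+2) * 2^m := by
  intro m
  induction m with
  | zero =>
    rw [r11 2, l11two, r01T 1, r10F 1, l01 0, l10 0]
    norm_num
  | succ m ih =>
    rw [r11 (m+3), ih, r01T (m+2), r10F (m+2), l01 (m+1), l10 (m+1)]
    ring

lemma B_eq (m : ℕ) : B (m+2) = MP P11 m := by
  unfold B MP
  congr 1

lemma B_zero : B 0 = 0 := by decide
lemma B_one : B 1 = 0 := by decide
lemma B_two : B 2 = 0 := by rw [B_eq 0, l11zero]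
lemma B_three : B 3 = 0 := by
  rw [show (3:ℕ) = 1 + 2 by rfl, B_eq 1, l11one]
lemma B_four : B 4 = 0 := by
  rw [show (4:ℕ) = 2 + 2 by rfl, B_eq 2, l11two]

lemma B_val (m : ℕ) : B (m+5) = (m+1) * (m+2) * 2^m := by
  rw [show m + 5 = (m + 3) + 2 by omega, B_eq (m+3), l11 m]

lemma B_five : B 5 = 2 := by simpa using B_val 0
lemma B_six : B 6 = 12 := by simpa using B_val 1
lemma B_seven : B 7 = 48 := by simpa using B_val 2

end GenFunAux

open PowerSeries GenFunAux in
theorem genfun_one132_1 :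
    (1 - 2 * PowerSeries.X) ^ 3 * PowerSeries.mk (fun n => (B n : ℚ)) = 2 * PowerSeries.X ^ 5 := by
  have key : (1 - 2 * X : ℚ⟦X⟧) ^ 3 * PowerSeries.mk (fun n => (B n : ℚ))
      = PowerSeries.mk (fun n => (B n : ℚ)) * 1
        - C (R := ℚ) 6 * (PowerSeries.mk (fun n => (B n : ℚ)) * X ^ 1)
        + C (R := ℚ) 12 * (PowerSeries.mk (fun n => (B n : ℚ)) * X ^ 2)
        - C (R := ℚ) 8 * (PowerSeries.mk (fun n => (B n : ℚ)) * X ^ 3) := by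
    rw [map_ofNat (C (R := ℚ)) 6, map_ofNat (C (R := ℚ)) 12, map_ofNat (C (R := ℚ)) 8]
    ring
  rw [key]
  ext k
  rw [map_sub, map_add, map_sub, coeff_C_mul, coeff_C_mul, coeff_C_mul,
    coeff_mul_X_pow', coeff_mul_X_pow', coeff_mul_X_pow', mul_one, coeff_mk]
  have hR : (coeff k) (2 * X ^ 5 : ℚ⟦X⟧) = if k = 5 then 2 else 0 := by
    rw [show (2 * X ^ 5 : ℚ⟦X⟧) = C (R := ℚ) 2 * X ^ 5 by rw [map_ofNat (C (R := ℚ)) 2]]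
    rw [coeff_C_mul, coeff_X_pow]
    split <;> simp
  rw [hR]
  rcases Nat.lt_or_ge k 8 with hk | hk
  · interval_cases k <;>
      norm_num [B_zero, B_one, B_two, B_three, B_four, B_five, B_six, B_seven,
        PowerSeries.coeff_mk]
  · obtain ⟨j, rfl⟩ := Nat.exists_eq_add_of_le hk
    rw [if_pos (by omega), if_pos (by omega), if_pos (by omega), if_neg (by omega)]
    rw [coeff_mk, coeff_mk, coeff_mk]
    rw [show 8 + j - 1 = (j + 2) + 5 by omega, show 8 + j - 2 = (j + 1) + 5 by omega,
      show 8 + j - 3 = j + 5 by omega, show 8 + j = (j + 3) + 5 by omega,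
      B_val, B_val, B_val, B_val]
    push_cast
    ring
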